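/- Let d > 10ε > 0. Suppose (A,B) forms an (ε,d)-super-regular pair with |A|, |B| ≥ ℓ. Let U_A ⊆ A and U_B ⊆ B be such that |U_A| ≤ |A|/2 and |U_B| ≤ d|B|/4. Let (T,r) be a rooted tree of order at most dℓ/4, and let v ∈ A∖U_A be arbitrary. Then there exists an (r ↪ v, V_even(T,r) ↪ A∖U_A, V_odd(T,r) ↪ B∖U_B)-embedding of T, i.e. an embedding mapping r to v. -/

import Mathlib

open Finset

lemma real_card_sdiff {α : Type*} [DecidableEq α] (X Y : Finset α) :
    (X.card : ℝ) - Y.card ≤ ((X \ Y).card : ℝ) := by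
  have h : X.card ≤ (X \ Y).card + Y.card := Finset.card_le_card_sdiff_add_card
  have h' : (X.card : ℝ) ≤ ((X \ Y).card : ℝ) + Y.card := by exact_mod_cast h
  linarith

lemma card_interedges_sum {V : Type*} [DecidableEq V] (G : SimpleGraph V) [DecidableRel G.Adj]
    (s t : Finset V) :
    (Rel.interedges G.Adj s t).card = ∑ a ∈ s, (t.filter (G.Adj a)).card := by
  rw [Rel.interedges_eq_biUnion, Finset.card_biUnion]
  · simp
  · intro x hx y hy hxy
    simp only [Finset.disjoint_left, Finset.mem_map, Finset.mem_filter,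
      Function.Embedding.coeFn_mk]
    rintro ⟨a, b⟩ ⟨c, hc, h1⟩ ⟨e, he, h2⟩
    apply hxy
    have e1 : x = a := congrArg Prod.fst h1
    have e2 : y = a := congrArg Prod.fst h2
    rw [e1, e2]

lemma edgeDensity_formula {V : Type*} [DecidableEq V] (G : SimpleGraph V) [DecidableRel G.Adj]
    (s t : Finset V) :
    (G.edgeDensity s t : ℝ) = ((Rel.interedges G.Adj s t).card : ℝ) / ((s.card : ℝ) * t.card) := by
  have h0 : G.edgeDensity s t
      = ((Rel.interedges G.Adj s t).card : ℚ) / ((s.card : ℚ) * (t.card : ℚ)) := rfl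
  rw [h0]
  push_cast
  ring

lemma edgeDensity_lower {V : Type*} [DecidableEq V] (G : SimpleGraph V) [DecidableRel G.Adj]
    (s t : Finset V) (c : ℝ) (hs : 0 < s.card) (ht : 0 < t.card)
    (h : ∀ a ∈ s, c * t.card ≤ ((t.filter (G.Adj a)).card : ℝ)) :
    c ≤ (G.edgeDensity s t : ℝ) := by
  have hs' : (0:ℝ) < s.card := by exact_mod_cast hs
  have ht' : (0:ℝ) < t.card := by exact_mod_cast ht
  have hsum : c * s.card * t.card ≤ ((Rel.interedges G.Adj s t).card : ℝ) := by
    rw [card_interedges_sum]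
    push_cast
    calc c * s.card * t.card = ∑ _a ∈ s, c * (t.card : ℝ) := by
          rw [Finset.sum_const, nsmul_eq_mul]; ring
      _ ≤ ∑ a ∈ s, ((t.filter (G.Adj a)).card : ℝ) := Finset.sum_le_sum h
  rw [edgeDensity_formula, le_div_iff₀ (by positivity)]
  nlinarith

lemma edgeDensity_upper {V : Type*} [DecidableEq V] (G : SimpleGraph V) [DecidableRel G.Adj]
    (s t : Finset V) (c : ℝ) (hs : 0 < s.card) (ht : 0 < t.card)
    (h : ∀ a ∈ s, ((t.filter (G.Adj a)).card : ℝ) ≤ c * t.card) :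
    (G.edgeDensity s t : ℝ) ≤ c := by
  have hs' : (0:ℝ) < s.card := by exact_mod_cast hs
  have ht' : (0:ℝ) < t.card := by exact_mod_cast ht
  have hsum : ((Rel.interedges G.Adj s t).card : ℝ) ≤ c * s.card * t.card := by
    rw [card_interedges_sum]
    push_cast
    calc ∑ a ∈ s, ((t.filter (G.Adj a)).card : ℝ) ≤ ∑ _a ∈ s, c * (t.card : ℝ) :=
          Finset.sum_le_sum h
      _ = c * s.card * t.card := by rw [Finset.sum_const, nsmul_eq_mul]; ring
  rw [edgeDensity_formula, div_le_iff₀ (by positivity)]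
  nlinarith

/-- A pair `(A,B)` of disjoint vertex sets is `ε`-regular in `G` if all subpairs `(A',B')`
with `|A'| ≥ ε|A|` and `|B'| ≥ ε|B|` have density within `ε` of the density of `(A,B)`. -/
def IsRegularPair {V : Type} [Fintype V] (G : SimpleGraph V) [DecidableRel G.Adj]
    (ε : ℝ) (A B : Finset V) : Prop :=
  ∀ A' ⊆ A, ∀ B' ⊆ B, ε * A.card ≤ A'.card → ε * B.card ≤ B'.card →
    |(G.edgeDensity A' B' : ℝ) - (G.edgeDensity A B : ℝ)| < ε

/-- A pair `(A,B)` is `(ε,d)`-super-regular: it is `ε`-regular, every vertex of `A` has at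
least `d|B|` neighbours in `B`, and every vertex of `B` has at least `d|A|` neighbours in `A`. -/
def IsSuperRegularPair {V : Type} [Fintype V] (G : SimpleGraph V) [DecidableRel G.Adj]
    (ε d : ℝ) (A B : Finset V) : Prop :=
  IsRegularPair G ε A B ∧
    (∀ a ∈ A, d * B.card ≤ ((G.neighborSet a ∩ (↑B : Set V)).ncard : ℝ)) ∧
    (∀ b ∈ B, d * A.card ≤ ((G.neighborSet b ∩ (↑A : Set V)).ncard : ℝ))

set_option maxHeartbeats 1000000 in
/-- Embedding a rooted tree of order at most `dℓ/4` into an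
`(ε,d)`-super-regular pair `(A,B)` with the root mapped to a prescribed vertex
`v ∈ A ∖ U_A`, even levels in `A ∖ U_A` and odd levels in `B ∖ U_B`. -/
theorem stmt11 (V : Type) [Fintype V] [DecidableEq V] (G : SimpleGraph V) [DecidableRel G.Adj]
    (ε d : ℝ) (hε : 0 < ε) (hd : 10 * ε < d)
    (A B : Finset V) (hAB : Disjoint A B) (ℓ : ℕ)
    (hA : ℓ ≤ A.card) (hB : ℓ ≤ B.card)
    (hsr : IsSuperRegularPair G ε d A B)
    (UA UB : Finset V) (hUA : UA ⊆ A) (hUB : UB ⊆ B)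
    (hUAcard : (UA.card : ℝ) ≤ (A.card : ℝ) / 2)
    (hUBcard : (UB.card : ℝ) ≤ d * B.card / 4)
    (W : Type) [Fintype W] (T : SimpleGraph W) (hT : T.IsTree) (r : W)
    (horder : (Fintype.card W : ℝ) ≤ d * ℓ / 4)
    (v : V) (hv : v ∈ A \ UA) :
    ∃ φ : T →g G, Function.Injective φ ∧ φ r = v ∧
      (∀ a : W, Even (T.dist r a) → φ a ∈ A \ UA) ∧
      (∀ a : W, Odd (T.dist r a) → φ a ∈ B \ UB) := by
  classical
  have hconn := hT.isConnected
  -- the unique path to the root, and its properties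
  obtain ⟨path, hIsPath, hLen, hUniq⟩ : ∃ path : ∀ w : W, T.Walk w r,
      (∀ w, (path w).IsPath) ∧ (∀ w, (path w).length = T.dist r w) ∧
      (∀ w (q : T.Walk w r), q.IsPath → q = path w) := by
    have h : ∀ w : W, ∃ p : T.Walk w r,
        p.IsPath ∧ p.length = T.dist r w ∧ ∀ q : T.Walk w r, q.IsPath → q = p := by
      intro w
      obtain ⟨p, hp, hup⟩ := hT.existsUnique_path w r
      refine ⟨p, hp, ?_, fun q hq => hup q hq⟩
      obtain ⟨q0, hq0⟩ := hconn.exists_walk_length_eq_dist w r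
      have hbp : q0.bypass = p := hup q0.bypass q0.bypass_isPath
      have h2 : p.length ≤ T.dist w r := by
        rw [← hbp, ← hq0]; exact q0.length_bypass_le
      have h1 : T.dist w r ≤ p.length := SimpleGraph.dist_le p
      rw [SimpleGraph.dist_comm]
      omega
    choose path h1 h2 h3 using h
    exact ⟨path, h1, h2, h3⟩
  have hsupp : ∀ w, ∀ u, ∀ hu : u ∈ (path w).support, T.dist r u ≤ T.dist r w := by
    intro w u hu
    have h4 := SimpleGraph.Walk.length_dropUntil_le (path w) hu
    have h5 : T.dist u r ≤ ((path w).dropUntil u hu).length := SimpleGraph.dist_le _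
    rw [SimpleGraph.dist_comm] at h5
    have := hLen w
    omega
  -- the parent function
  obtain ⟨par, hpar⟩ : ∃ par : W → W, ∀ w, w ≠ r →
      T.Adj w (par w) ∧ T.dist r (par w) + 1 = T.dist r w ∧
      (∀ a, T.Adj a w → T.dist r a + 1 = T.dist r w → a = par w) := by
    refine ⟨fun w => (path w).getVert 1, fun w hw => ?_⟩
    obtain ⟨x, hadj, q, hq⟩ := SimpleGraph.Walk.exists_eq_cons_of_ne hw (path w)
    have hx1 : (path w).getVert 1 = x := by
      rw [hq]; exact (SimpleGraph.Walk.getVert_cons_succ (n := 0) q hadj).trans (SimpleGraph.Walk.getVert_zero q)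
    have hqp : q.IsPath := by
      have := hIsPath w; rw [hq] at this; exact this.of_cons
    have hqe : q = path x := hUniq x q hqp
    have hlw : (path w).length = q.length + 1 := by
      rw [hq]; simp [SimpleGraph.Walk.length_cons]
    have hdx : T.dist r x + 1 = T.dist r w := by
      have ha := hLen w
      have hb := hLen x
      rw [← hqe] at hb
      omega
    refine ⟨by simp only []; rw [hx1]; exact hadj, by simp only []; rw [hx1]; exact hdx, ?_⟩
    intro a hadj' _
    have hws : w ∉ (path a).support := by
      intro hmem
      have := hsupp a w hmem
      omega
    have hP : (SimpleGraph.Walk.cons hadj'.symm (path a)).IsPath := (hIsPath a).cons hws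
    have heq : SimpleGraph.Walk.cons hadj'.symm (path a) = path w := hUniq w _ hP
    have hgv : (SimpleGraph.Walk.cons hadj'.symm (path a)).getVert 1 = a :=
      (SimpleGraph.Walk.getVert_cons_succ (n := 0) _ _).trans (SimpleGraph.Walk.getVert_zero _)
    rw [heq] at hgv
    simp only []
    exact hgv.symm
  -- adjacent vertices lie on consecutive levels
  have hadj_dist : ∀ a b, T.Adj a b →
      T.dist r b = T.dist r a + 1 ∨ T.dist r a = T.dist r b + 1 := by
    intro a b hadj
    have hab1 : T.dist a b = 1 := SimpleGraph.dist_eq_one_iff_adj.mpr hadj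
    have hba1 : T.dist b a = 1 := SimpleGraph.dist_eq_one_iff_adj.mpr hadj.symm
    have t1 : T.dist r b ≤ T.dist r a + T.dist a b := hconn.dist_triangle
    have t2 : T.dist r a ≤ T.dist r b + T.dist b a := hconn.dist_triangle
    have hne : T.dist r a ≠ T.dist r b := by
      intro heq
      by_cases har : a = r
      · subst har
        have h0 : T.dist a a = 0 := SimpleGraph.dist_self
        have hb0 : T.dist a b = 0 := by omega
        exact hadj.ne ((hconn.dist_eq_zero_iff).mp hb0)
      · have hbr : b ≠ r := by
          intro hb
          subst hb
          have h0 : T.dist b b = 0 := SimpleGraph.dist_self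
          have ha0 : T.dist b a = 0 := by omega
          exact har ((hconn.dist_eq_zero_iff).mp ha0).symm
        have hbs : b ∉ (path a).support := by
          intro hmem
          have hts := SimpleGraph.Walk.take_spec (path a) hmem
          have hlsum : ((path a).takeUntil b hmem).length +
              ((path a).dropUntil b hmem).length = (path a).length := by
            have := congrArg SimpleGraph.Walk.length hts
            rwa [SimpleGraph.Walk.length_append] at this
          have h3 : 1 ≤ ((path a).takeUntil b hmem).length := by
            have := SimpleGraph.dist_le ((path a).takeUntil b hmem)
            omega
          have h4 : T.dist r b ≤ ((path a).dropUntil b hmem).length := by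
            have := SimpleGraph.dist_le ((path a).dropUntil b hmem)
            rwa [SimpleGraph.dist_comm] at this
          have := hLen a
          omega
        have hP : (SimpleGraph.Walk.cons hadj.symm (path a)).IsPath := (hIsPath a).cons hbs
        have heq2 := hUniq b _ hP
        have hl := congrArg SimpleGraph.Walk.length heq2
        rw [SimpleGraph.Walk.length_cons] at hl
        have hla := hLen a
        have hlb := hLen b
        omega
    omega
  -- basic numeric facts
  have hd0 : 0 < d := lt_trans (by positivity) hd
  have hWne : Nonempty W := ⟨r⟩
  have hW1 : 1 ≤ Fintype.card W := Fintype.card_pos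
  have hWR : (1:ℝ) ≤ Fintype.card W := by exact_mod_cast hW1
  have hl1 : 1 ≤ ℓ := by
    rcases Nat.eq_zero_or_pos ℓ with h | h
    · exfalso
      have hcon : (Fintype.card W : ℝ) ≤ 0 := by
        rw [h] at horder
        simpa using horder
      linarith
    · exact h
  have hApos : 0 < A.card := lt_of_lt_of_le hl1 hA
  have hBpos : 0 < B.card := lt_of_lt_of_le hl1 hB
  have hAposR : (0:ℝ) < A.card := by exact_mod_cast hApos
  have hBposR : (0:ℝ) < B.card := by exact_mod_cast hBpos
  have hd1 : d ≤ 1 := by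
    obtain ⟨a, ha⟩ := Finset.card_pos.mp hApos
    have h1 := hsr.2.1 a ha
    have h2 : (G.neighborSet a ∩ (↑B : Set V)).ncard ≤ B.card := by
      have := Set.ncard_le_ncard
        (Set.inter_subset_right : G.neighborSet a ∩ ↑B ⊆ ↑B) (B.finite_toSet)
      rwa [Set.ncard_coe_finset] at this
    have h2' : ((G.neighborSet a ∩ (↑B : Set V)).ncard : ℝ) ≤ B.card := by exact_mod_cast h2
    nlinarith
  have hε10 : ε ≤ d / 10 := by linarith
  have hε12 : ε ≤ 1 / 2 := by linarith
  -- degrees as finset cards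
  have hfilter_eq : ∀ (a : V) (S : Finset V),
      ((G.neighborSet a ∩ (↑S : Set V)).ncard : ℝ) = ((S.filter (G.Adj a)).card : ℝ) := by
    intro a S
    have h : G.neighborSet a ∩ ↑S = ↑(S.filter (G.Adj a)) := by
      ext x; simp [SimpleGraph.mem_neighborSet, and_comm]
    rw [h, Set.ncard_coe_finset]
  have hdegB : ∀ a ∈ A, d * B.card ≤ ((B.filter (G.Adj a)).card : ℝ) := by
    intro a ha
    rw [← hfilter_eq]
    exact hsr.2.1 a ha
  have hA'1 : (A.card : ℝ) / 2 ≤ ((A \ UA).card : ℝ) := by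
    rw [Finset.card_sdiff_of_subset hUA, Nat.cast_sub (Finset.card_le_card hUA)]
    linarith
  have hA'posR : (0:ℝ) < ((A \ UA).card : ℝ) := lt_of_lt_of_le (by linarith) hA'1
  have hA'pos : 0 < (A \ UA).card := by exact_mod_cast hA'posR
  -- bad vertices of B
  obtain ⟨BadB, hBadmem, hBadB⟩ : ∃ BadB : Finset V,
      (∀ b, b ∈ BadB ↔ b ∈ B ∧
        (((A \ UA).filter (G.Adj b)).card : ℝ) < (d - ε) * ((A \ UA).card : ℝ)) ∧
      ((BadB.card : ℝ) ≤ ε * B.card) := by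
    refine ⟨B.filter (fun b =>
      (((A \ UA).filter (G.Adj b)).card : ℝ) < (d - ε) * ((A \ UA).card : ℝ)),
      fun b => Finset.mem_filter, ?_⟩
    set Bad := B.filter (fun b =>
      (((A \ UA).filter (G.Adj b)).card : ℝ) < (d - ε) * ((A \ UA).card : ℝ)) with hBad
    by_contra hc
    push_neg at hc
    have hBadsub : Bad ⊆ B := Finset.filter_subset _ _
    have hBadposR : (0:ℝ) < Bad.card := lt_trans (by positivity) hc
    have hBadpos : 0 < Bad.card := by exact_mod_cast hBadposR
    have hreg := hsr.1 (A \ UA) Finset.sdiff_subset Bad hBadsub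
      (by nlinarith) (le_of_lt hc)
    have hlow := edgeDensity_lower G A B d hApos hBpos hdegB
    have hup : (G.edgeDensity Bad (A \ UA) : ℝ) ≤ d - ε := by
      apply edgeDensity_upper G Bad (A \ UA) (d - ε) hBadpos hA'pos
      intro b hb
      exact le_of_lt (Finset.mem_filter.mp hb).2
    have hcomm : (G.edgeDensity (A \ UA) Bad : ℝ) = (G.edgeDensity Bad (A \ UA) : ℝ) := by
      exact_mod_cast congrArg (fun q : ℚ => (q : ℝ)) (G.edgeDensity_comm (A \ UA) Bad)
    have habs := abs_lt.mp hreg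
    linarith [habs.1, habs.2]
  -- a rank function : injective, monotone in distance from the root
  obtain ⟨rank, hrank_lt, hrank_inj⟩ : ∃ rank : W → ℕ,
      (∀ x y, T.dist r x < T.dist r y → rank x < rank y) ∧
      (∀ x y, rank x = rank y → x = y) := by
    refine ⟨fun w => Fintype.card W * T.dist r w + ((Fintype.equivFin W) w).val, ?_, ?_⟩
    · intro x y h
      simp only []
      have hfx : ((Fintype.equivFin W) x).val < Fintype.card W := ((Fintype.equivFin W) x).isLt
      have h1 : Fintype.card W * (T.dist r x + 1) ≤ Fintype.card W * T.dist r y :=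
        Nat.mul_le_mul_left _ h
      rw [Nat.mul_succ] at h1
      omega
    · intro x y h
      simp only [] at h
      have hfx : ((Fintype.equivFin W) x).val < Fintype.card W := ((Fintype.equivFin W) x).isLt
      have hfy : ((Fintype.equivFin W) y).val < Fintype.card W := ((Fintype.equivFin W) y).isLt
      have hm : (Fintype.card W * T.dist r x + ((Fintype.equivFin W) x).val) % Fintype.card W
          = (Fintype.card W * T.dist r y + ((Fintype.equivFin W) y).val) % Fintype.card W := by
        rw [h]
      rw [Nat.mul_add_mod, Nat.mul_add_mod, Nat.mod_eq_of_lt hfx, Nat.mod_eq_of_lt hfy] at hm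
      exact (Fintype.equivFin W).injective (Fin.ext hm)
  -- main greedy embedding by induction
  have main : ∀ (m : ℕ) (S : Finset W), S.card ≤ m →
      (∀ x ∈ S, ∀ y : W, rank y ≤ rank x → y ∈ S) →
      ∃ φ : W → V, Set.InjOn φ ↑S ∧
        ∀ w ∈ S, (w = r → φ w = v) ∧
          (Even (T.dist r w) → φ w ∈ A \ UA) ∧
          (Odd (T.dist r w) → φ w ∈ (B \ UB) \ BadB) ∧
          (w ≠ r → G.Adj (φ (par w)) (φ w)) := by
    intro m
    induction m with
    | zero =>
      intro S hS _
      have hSe : S = ∅ := Finset.card_eq_zero.mp (Nat.le_zero.mp hS)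
      subst hSe
      exact ⟨fun _ => v, by simp [Set.InjOn], by simp⟩
    | succ m ih =>
      intro S hS hlow
      rcases S.eq_empty_or_nonempty with rfl | hne
      · exact ⟨fun _ => v, by simp [Set.InjOn], by simp⟩
      obtain ⟨w, hwS, hwmax⟩ := S.exists_max_image rank hne
      set S' := S.erase w with hS'def
      have hS'sub : S' ⊆ S := Finset.erase_subset _ _
      have hScard_pos : 0 < S.card := Finset.card_pos.mpr hne
      have hce : S'.card + 1 = S.card := by
        rw [hS'def]
        have := Finset.card_erase_of_mem hwS
        omega
      have hS'card : S'.card ≤ m := by omega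
      have hlow' : ∀ x ∈ S', ∀ y : W, rank y ≤ rank x → y ∈ S' := by
        intro x hx y hy
        have hxS := hS'sub hx
        have hyS : y ∈ S := hlow x hxS y hy
        refine Finset.mem_erase.mpr ⟨?_, hyS⟩
        intro hyw
        subst hyw
        have h1 := hwmax x hxS
        have hxw : x = y := hrank_inj x y (le_antisymm h1 hy)
        exact (Finset.mem_erase.mp hx).1 hxw
      obtain ⟨φ', hinj', hQ'⟩ := ih S' hS'card hlow'
      by_cases hwr : w = r
      · -- the maximum is the root : S = {r}
        have hSsub : ∀ x ∈ S, x = r := by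
          intro x hx
          by_contra hxr
          have hdx : 0 < T.dist r x := hconn.pos_dist_of_ne (fun h => hxr h.symm)
          have hrw : rank w < rank x := by
            rw [hwr]
            apply hrank_lt
            rw [SimpleGraph.dist_self]
            exact hdx
          have := hwmax x hx
          omega
        refine ⟨fun _ => v, fun a ha b hb _ => ?_, fun x hxS => ?_⟩
        · rw [hSsub a (Finset.mem_coe.mp ha), hSsub b (Finset.mem_coe.mp hb)]
        · have hx := hSsub x hxS
          subst hx
          refine ⟨fun _ => rfl, fun _ => hv, fun ho => ?_, fun hne' => absurd rfl hne'⟩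
          rw [SimpleGraph.dist_self] at ho
          rw [Nat.odd_iff] at ho
          omega
      · -- extend the embedding to w
        obtain ⟨hadjwp, hdist_p, huniq_p⟩ := hpar w hwr
        have hrank_pw : rank (par w) < rank w := hrank_lt (par w) w (by omega)
        have hparne : par w ≠ w := by
          intro h
          rw [h] at hrank_pw
          omega
        have hpS : par w ∈ S := hlow w hwS (par w) (le_of_lt hrank_pw)
        have hpS' : par w ∈ S' := Finset.mem_erase.mpr ⟨hparne, hpS⟩
        have hwS' : w ∉ S' := Finset.notMem_erase w S
        have hS'cardR : (S'.card : ℝ) ≤ (Fintype.card W : ℝ) - 1 := by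
          have e1 : S'.card + 1 ≤ Fintype.card W := by
            have h2 := Finset.card_le_univ S
            omega
          have e2 : (S'.card : ℝ) + 1 ≤ (Fintype.card W : ℝ) := by exact_mod_cast e1
          linarith
        -- generic extension builder
        have hmk : ∀ x : V, G.Adj (φ' (par w)) x → x ∉ S'.image φ' →
            (Even (T.dist r w) → x ∈ A \ UA) → (Odd (T.dist r w) → x ∈ (B \ UB) \ BadB) →
            ∃ φ : W → V, Set.InjOn φ ↑S ∧
              ∀ w' ∈ S, (w' = r → φ w' = v) ∧
                (Even (T.dist r w') → φ w' ∈ A \ UA) ∧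
                (Odd (T.dist r w') → φ w' ∈ (B \ UB) \ BadB) ∧
                (w' ≠ r → G.Adj (φ (par w')) (φ w')) := by
          intro x hxadj hxnew hxev hxod
          refine ⟨Function.update φ' w x, ?_, ?_⟩
          · intro a ha b hb hab
            rw [Finset.mem_coe] at ha hb
            by_cases haw : a = w
            · by_cases hbw : b = w
              · rw [haw, hbw]
              · exfalso
                have hbS' : b ∈ S' := Finset.mem_erase.mpr ⟨hbw, hb⟩
                rw [haw, Function.update_self, Function.update_of_ne hbw] at hab
                exact hxnew (Finset.mem_image.mpr ⟨b, hbS', hab.symm⟩)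
            · by_cases hbw : b = w
              · exfalso
                have haS' : a ∈ S' := Finset.mem_erase.mpr ⟨haw, ha⟩
                rw [hbw, Function.update_self, Function.update_of_ne haw] at hab
                exact hxnew (Finset.mem_image.mpr ⟨a, haS', hab⟩)
              · have haS' : a ∈ S' := Finset.mem_erase.mpr ⟨haw, ha⟩
                have hbS' : b ∈ S' := Finset.mem_erase.mpr ⟨hbw, hb⟩
                rw [Function.update_of_ne haw, Function.update_of_ne hbw] at hab
                exact hinj' (Finset.mem_coe.mpr haS') (Finset.mem_coe.mpr hbS') hab
          · intro w' hw'S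
            by_cases hw'w : w' = w
            · refine ⟨fun h => absurd (hw'w.symm.trans h) hwr, ?_, ?_, ?_⟩
              · intro he
                rw [hw'w] at he ⊢
                rw [Function.update_self]
                exact hxev he
              · intro ho
                rw [hw'w] at ho ⊢
                rw [Function.update_self]
                exact hxod ho
              · intro _
                rw [hw'w, Function.update_self, Function.update_of_ne hparne]
                exact hxadj
            · have hw'S' : w' ∈ S' := Finset.mem_erase.mpr ⟨hw'w, hw'S⟩
              have hQw' := hQ' w' hw'S'
              rw [Function.update_of_ne hw'w]
              refine ⟨hQw'.1, hQw'.2.1, hQw'.2.2.1, ?_⟩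
              intro hw'r
              obtain ⟨_, hd2, _⟩ := hpar w' hw'r
              have hrpw' : rank (par w') < rank w' := hrank_lt (par w') w' (by omega)
              have hrw'w : rank w' ≤ rank w := hwmax w' hw'S
              have hparw'ne : par w' ≠ w := by
                intro h
                rw [h] at hrpw'
                omega
              rw [Function.update_of_ne hparw'ne]
              exact hQw'.2.2.2 hw'r
        rcases Nat.even_or_odd (T.dist r w) with hev | hod
        · -- w at even level : embed into A ∖ U_A
          have hodp : Odd (T.dist r (par w)) := by
            rw [Nat.even_iff] at hev
            rw [Nat.odd_iff]
            omega
          have hφp := (hQ' (par w) hpS').2.2.1 hodp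
          rw [Finset.mem_sdiff] at hφp
          have hφpB : φ' (par w) ∈ B := (Finset.mem_sdiff.mp hφp.1).1
          have hgood : (d - ε) * (((A \ UA).card : ℝ))
              ≤ (((A \ UA).filter (G.Adj (φ' (par w)))).card : ℝ) := by
            by_contra hlt
            push_neg at hlt
            exact hφp.2 ((hBadmem _).mpr ⟨hφpB, hlt⟩)
          have hde : (0:ℝ) ≤ d - ε := by linarith
          have hC : (0:ℝ) <
              ((((A \ UA).filter (G.Adj (φ' (par w)))) \ (S'.image φ')).card : ℝ) := by
            have h1 := real_card_sdiff ((A \ UA).filter (G.Adj (φ' (par w)))) (S'.image φ')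
            have h2 : ((S'.image φ').card : ℝ) ≤ (S'.card : ℝ) := by
              exact_mod_cast Finset.card_image_le
            have hgA' : (d - ε) * ((A.card : ℝ) / 2) ≤ (d - ε) * (((A \ UA).card : ℝ)) :=
              mul_le_mul_of_nonneg_left hA'1 hde
            have hεA : ε * (A.card : ℝ) ≤ d / 10 * (A.card : ℝ) :=
              mul_le_mul_of_nonneg_right hε10 (Nat.cast_nonneg _)
            have hdlA : d * (ℓ : ℝ) ≤ d * (A.card : ℝ) :=
              mul_le_mul_of_nonneg_left (by exact_mod_cast hA) (le_of_lt hd0)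
            have hdA0 : (0:ℝ) ≤ d * A.card := by positivity
            nlinarith [h1, h2, hgood, hgA', hεA, hdlA, hdA0, horder, hS'cardR]
          obtain ⟨x, hx⟩ := Finset.card_pos.mp (by exact_mod_cast hC)
          rw [Finset.mem_sdiff, Finset.mem_filter] at hx
          exact hmk x hx.1.2 hx.2 (fun _ => hx.1.1)
            (fun ho => absurd hev (Nat.not_even_iff_odd.mpr ho))
        · -- w at odd level : embed into B ∖ (U_B ∪ BadB)
          have hevp : Even (T.dist r (par w)) := by
            rw [Nat.odd_iff] at hod
            rw [Nat.even_iff]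
            omega
          have hφpA : φ' (par w) ∈ A \ UA := (hQ' (par w) hpS').2.1 hevp
          have hφpAA : φ' (par w) ∈ A := (Finset.mem_sdiff.mp hφpA).1
          have hdeg := hdegB (φ' (par w)) hφpAA
          have hC : (0:ℝ) <
              ((((B.filter (G.Adj (φ' (par w)))) \ (UB ∪ BadB)) \ (S'.image φ')).card : ℝ) := by
            have h1 := real_card_sdiff (B.filter (G.Adj (φ' (par w)))) (UB ∪ BadB)
            have h1b := real_card_sdiff ((B.filter (G.Adj (φ' (par w)))) \ (UB ∪ BadB))
              (S'.image φ')
            have h2 : ((S'.image φ').card : ℝ) ≤ (S'.card : ℝ) := by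
              exact_mod_cast Finset.card_image_le
            have hu : ((UB ∪ BadB).card : ℝ) ≤ (UB.card : ℝ) + BadB.card := by
              exact_mod_cast Finset.card_union_le UB BadB
            have hεB : ε * (B.card : ℝ) ≤ d / 10 * (B.card : ℝ) :=
              mul_le_mul_of_nonneg_right hε10 (Nat.cast_nonneg _)
            have hdlB : d * (ℓ : ℝ) ≤ d * (B.card : ℝ) :=
              mul_le_mul_of_nonneg_left (by exact_mod_cast hB) (le_of_lt hd0)
            have hdB0 : (0:ℝ) ≤ d * B.card := by positivity
            nlinarith [h1, h1b, h2, hu, hεB, hdlB, hdB0, horder, hS'cardR, hdeg,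
              hBadB, hUBcard]
          obtain ⟨x, hx⟩ := Finset.card_pos.mp (by exact_mod_cast hC)
          rw [Finset.mem_sdiff, Finset.mem_sdiff, Finset.mem_filter, Finset.mem_union] at hx
          obtain ⟨⟨⟨hxB, hxadj⟩, hxu⟩, hxnew⟩ := hx
          exact hmk x hxadj hxnew
            (fun he => absurd hod (Nat.not_odd_iff_even.mpr he))
            (fun _ => Finset.mem_sdiff.mpr ⟨Finset.mem_sdiff.mpr
              ⟨hxB, fun h => hxu (Or.inl h)⟩, fun h => hxu (Or.inr h)⟩)
  -- conclude
  obtain ⟨φ, hinj, hQ⟩ := main (Fintype.card W) Finset.univ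
    (le_of_eq Finset.card_univ) (fun x _ y _ => Finset.mem_univ y)
  have hhom : ∀ a b : W, T.Adj a b → G.Adj (φ a) (φ b) := by
    intro a b hadj
    rcases hadj_dist a b hadj with h | h
    · have hbr : b ≠ r := by
        intro hb
        rw [hb, SimpleGraph.dist_self] at h
        omega
      obtain ⟨_, _, huq⟩ := hpar b hbr
      have hab : a = par b := huq a hadj h.symm
      have hQb := (hQ b (Finset.mem_univ b)).2.2.2 hbr
      rw [← hab] at hQb
      exact hQb
    · have har : a ≠ r := by
        intro hb
        rw [hb, SimpleGraph.dist_self] at h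
        omega
      obtain ⟨_, _, huq⟩ := hpar a har
      have hba : b = par a := huq b hadj.symm h.symm
      have hQa := (hQ a (Finset.mem_univ a)).2.2.2 har
      rw [← hba] at hQa
      exact hQa.symm
  refine ⟨⟨φ, fun {a b} h => hhom a b h⟩, ?_, ?_, ?_, ?_⟩
  · have h := hinj
    rw [Finset.coe_univ] at h
    intro a b hab
    exact h (Set.mem_univ a) (Set.mem_univ b) hab
  · exact (hQ r (Finset.mem_univ r)).1 rfl
  · intro a ha
    exact (hQ a (Finset.mem_univ a)).2.1 ha
  · intro a ha
    have h := (hQ a (Finset.mem_univ a)).2.2.1 ha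
    exact (Finset.mem_sdiff.mp h).1
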